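/- For every even integer k ≥ 2, every real M ≥ 1, and every α ∈ ℝ, the following inequality holds: α²·(α² + 1/M)^{k/2} + (1 − 1/M)^{k/2} − (1 − 2/M)·(α² + 1/M)^{k/2} ≥ 0. (Consequently the univariate polynomial p(α) on the left-hand side, being nonnegative on ℝ, is a sum of squares of polynomials.) -/

import Mathlib

open Polynomial

private lemma sos_mul_sq {R : Type*} [CommRing R] (a : R) {S : R} (h : IsSumSq S) :
    IsSumSq (a * a * S) := by
  induction h with
  | zero => simpa using IsSumSq.zero
  | @sq_add b S pS ih =>
      have : a * a * (b * b + S) = (a * b) * (a * b) + a * a * S := by ring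
      rw [this]
      exact IsSumSq.sq_add _ ih

private lemma sos_mul {R : Type*} [CommRing R] {S T : R} (hS : IsSumSq S) (hT : IsSumSq T) :
    IsSumSq (S * T) := by
  induction hS with
  | zero => simpa using IsSumSq.zero
  | @sq_add a S pS ih =>
      have : (a * a + S) * T = a * a * T + S * T := by ring
      rw [this]
      exact (sos_mul_sq a hT).add ih

private lemma sos_sq {R : Type*} [CommRing R] (a : R) : IsSumSq (a ^ 2) := by
  have : a ^ 2 = a * a + 0 := by ring
  rw [this]; exact IsSumSq.sq_add _ IsSumSq.zero

private lemma sos_pow {R : Type*} [CommRing R] {S : R} (h : IsSumSq S) (n : ℕ) :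
    IsSumSq (S ^ n) := by
  induction n with
  | zero => simpa using sos_sq (1 : R)
  | succ m ih => rw [pow_succ]; exact sos_mul ih h

private lemma sos_sum {R : Type*} [CommRing R] {ι : Type*} (s : Finset ι) (f : ι → R)
    (h : ∀ i ∈ s, IsSumSq (f i)) : IsSumSq (∑ i ∈ s, f i) := by
  induction s using Finset.cons_induction with
  | empty => simpa using IsSumSq.zero
  | cons i s his ih =>
      rw [Finset.sum_cons]
      exact (h i (Finset.mem_cons_self _ _)).add
        (ih fun j hj => h j (Finset.mem_cons_of_mem hj))

private lemma sos_C {c : ℝ} (hc : 0 ≤ c) : IsSumSq (Polynomial.C c) := by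
  have : Polynomial.C c = (Polynomial.C (Real.sqrt c)) ^ 2 := by
    rw [← Polynomial.C_pow, Real.sq_sqrt hc]
  rw [this]; exact sos_sq _

private lemma sos_fin {p : Polynomial ℝ} (h : IsSumSq p) :
    ∃ (r : ℕ) (q : Fin r → Polynomial ℝ), p = ∑ i, q i ^ 2 := by
  induction h with
  | zero => exact ⟨0, ![], by simp⟩
  | @sq_add a S pS ih =>
      obtain ⟨r, q, hq⟩ := ih
      exact ⟨r + 1, Fin.cons a q, by simp [Fin.sum_univ_succ, hq, sq]⟩

private lemma aux_id {R : Type*} [CommRing R] (u v : R) (n : ℕ) :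
    u ^ (n + 1) - v * u ^ n + v ^ n
      = (u - v) ^ 2 * (∑ j ∈ Finset.range n, u ^ j * v ^ (n - 1 - j))
        + v ^ n * u + (v ^ n - v ^ (n + 1)) := by
  have key := geom_sum₂_mul u v n
  linear_combination (v - u) * key

/-- For even `k ≥ 2`, `M ≥ 1` and all real `α`,
`α²(α² + 1/M)^{k/2} + (1 - 1/M)^{k/2} - (1 - 2/M)(α² + 1/M)^{k/2} ≥ 0`; consequently
the corresponding univariate polynomial is a sum of squares. -/
theorem stmt11 (k : ℕ) (hk : 2 ≤ k) (hke : Even k) (M : ℝ) (hM : 1 ≤ M) :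
    (∀ α : ℝ, 0 ≤ α ^ 2 * (α ^ 2 + 1 / M) ^ (k / 2) + (1 - 1 / M) ^ (k / 2)
        - (1 - 2 / M) * (α ^ 2 + 1 / M) ^ (k / 2)) ∧
    ∃ (r : ℕ) (q : Fin r → Polynomial ℝ),
      Polynomial.X ^ 2 * (Polynomial.X ^ 2 + Polynomial.C (1 / M)) ^ (k / 2)
          + Polynomial.C ((1 - 1 / M) ^ (k / 2))
          - Polynomial.C (1 - 2 / M) * (Polynomial.X ^ 2 + Polynomial.C (1 / M)) ^ (k / 2)
        = ∑ i, q i ^ 2 := by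
  have hM0 : 0 < M := lt_of_lt_of_le one_pos hM
  obtain ⟨a, ha⟩ : ∃ a : ℝ, a = 1 / M := ⟨_, rfl⟩
  obtain ⟨c, hc⟩ : ∃ c : ℝ, c = 1 - 1 / M := ⟨_, rfl⟩
  have ha0 : 0 ≤ a := by rw [ha]; positivity
  have hc0 : 0 ≤ c := by
    rw [hc]; simp only [sub_nonneg]; rw [div_le_one hM0]; exact hM
  have hc1 : c ≤ 1 := by
    rw [hc]; have : 0 < 1 / M := by positivity
    linarith
  have h2M : (1 : ℝ) - 2 / M = c - a := by rw [ha, hc]; ring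
  set n : ℕ := k / 2 with hn
  -- the sum-of-squares decomposition of the polynomial
  have hsos2 : ∃ (r : ℕ) (q : Fin r → Polynomial ℝ),
      Polynomial.X ^ 2 * (Polynomial.X ^ 2 + Polynomial.C (1 / M)) ^ n
          + Polynomial.C ((1 - 1 / M) ^ n)
          - Polynomial.C (1 - 2 / M) * (Polynomial.X ^ 2 + Polynomial.C (1 / M)) ^ n
        = ∑ i, q i ^ 2 := by
    rw [h2M, show ((1:ℝ) - 1/M) = c from hc.symm, ← ha]
    set t : Polynomial ℝ := Polynomial.X ^ 2 + Polynomial.C a with ht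
    have hid : Polynomial.X ^ 2 * t ^ n + Polynomial.C (c ^ n)
        - Polynomial.C (c - a) * t ^ n
        = (t - Polynomial.C c) ^ 2
            * (∑ j ∈ Finset.range n, t ^ j * (Polynomial.C c) ^ (n - 1 - j))
          + Polynomial.C (c ^ n) * t + Polynomial.C (c ^ n * (1 - c)) := by
      have key := aux_id t (Polynomial.C c) n
      rw [Polynomial.C_mul, Polynomial.C_pow, Polynomial.C_sub, Polynomial.C_sub,
        Polynomial.C_1, ht]
      linear_combination key
    rw [hid]
    have htsos : IsSumSq t := by
      rw [ht]
      have : Polynomial.X ^ 2 + Polynomial.C a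
          = Polynomial.X * Polynomial.X + (Polynomial.C a + 0) := by ring
      rw [this]
      exact IsSumSq.sq_add _ (by simpa using (sos_C ha0))
    have hGsos : IsSumSq (∑ j ∈ Finset.range n, t ^ j * (Polynomial.C c) ^ (n - 1 - j)) := by
      refine sos_sum _ _ fun j _ => sos_mul (sos_pow htsos j) ?_
      rw [← Polynomial.C_pow]
      exact sos_C (pow_nonneg hc0 _)
    refine sos_fin (IsSumSq.add (IsSumSq.add (sos_mul (sos_sq _) hGsos)
      (sos_mul (sos_C (pow_nonneg hc0 _)) htsos)) ?_)
    exact sos_C (mul_nonneg (pow_nonneg hc0 _) (by linarith))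
  refine ⟨?_, hsos2⟩
  intro α
  obtain ⟨r, q, hq⟩ := hsos2
  have heval := congrArg (Polynomial.eval α) hq
  simp only [Polynomial.eval_add, Polynomial.eval_sub, Polynomial.eval_mul, Polynomial.eval_pow,
    Polynomial.eval_X, Polynomial.eval_C, Polynomial.eval_finset_sum] at heval
  have hnn : 0 ≤ ∑ i : Fin r, (Polynomial.eval α (q i)) ^ 2 :=
    Finset.sum_nonneg fun i _ => sq_nonneg _
  rw [← heval] at hnn
  exact hnn
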